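/- Let R be a d×d P-matrix such that R_{ii} > 0 for all i, R_{i,i−1} < 0 for 2 ≤ i ≤ d, and R_{ij} = 0 for j ≤ i−2 (entries above the superdiagonal R_{ij} for j ≥ i+1 are arbitrary). Then R is a tight matrix: for every positive vector b ∈ ℝ^d, (R,b) is a tight system. -/

import Mathlib

/-- `(R, b)` is a tight system: the only solution of the tight-system
constraints is the all-ones solution. -/
def IsTightSystem {d : ℕ} (R : Matrix (Fin d) (Fin d) ℝ) (b : Fin d → ℝ) : Prop :=
  ∀ (x : Finset (Fin d) → ℝ) (xj : Fin d → Finset (Fin d) → ℝ),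
    (∀ D, x D ∈ Set.Icc (0 : ℝ) 1) →
    (∀ (D : Finset (Fin d)) (i : Fin d), i ∈ D →
      ∑ j, R i j * b j * (xj j D - x D) = 0) →
    (∀ D D' : Finset (Fin d), D ⊆ D' → x D' ≤ x D) →
    (∀ (j : Fin d) (D D' : Finset (Fin d)), D ⊆ D' → xj j D' ≤ xj j D) →
    (∀ (j : Fin d) (D : Finset (Fin d)), j ∈ D → xj j D = xj j (D.erase j)) →
    x ∅ = 1 →
    (∀ j, xj j ∅ = 1) →
    (∀ D, x D = 1) ∧ (∀ j D, xj j D = 1)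

/-- `R` is a P-matrix: all principal minors are positive. -/
def IsPMatrix {d : ℕ} (R : Matrix (Fin d) (Fin d) ℝ) : Prop :=
  ∀ D : Finset (Fin d), D.Nonempty →
    0 < (R.submatrix (fun i : D => (i : Fin d)) (fun j : D => (j : Fin d))).det

/-- A `d × d` P-matrix with positive diagonal, negative
subdiagonal entries, vanishing entries below the subdiagonal (and arbitrary
entries above the diagonal) is a tight matrix. -/

lemma tight_diag_pos (A : ℕ → ℕ → ℝ) (e : ℕ)
    (hPm : ∀ D : Finset ℕ, D.Nonempty → (∀ i ∈ D, i < e) →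
      0 < (Matrix.of fun p q : ↥D => A ↑p ↑q).det)
    {i : ℕ} (hi : i < e) : 0 < A i i := by
  have h := hPm {i} ⟨i, Finset.mem_singleton_self i⟩ (by simp [hi])
  haveI : Subsingleton ↥({i} : Finset ℕ) := ⟨by
    rintro ⟨a, ha⟩ ⟨c, hc⟩
    simp only [Finset.mem_singleton] at ha hc
    subst ha; subst hc; rfl⟩
  rwa [Matrix.det_eq_elem_of_subsingleton _ ⟨i, Finset.mem_singleton_self i⟩] at h

lemma tight_det_elim (A : ℕ → ℕ → ℝ) (m : ℕ)
    (hAnn : A (m+1) (m+1) ≠ 0)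
    (hz : ∀ k, k + 2 ≤ m + 1 → A (m+1) k = 0)
    (ρ : ℝ) (hρ : A (m+1) m + ρ * A (m+1) (m+1) = 0)
    (D : Finset ℕ) (hD : ∀ x ∈ D, x < m + 1) (hmem : m ∈ D) :
    (Matrix.of fun p q : ↥(insert (m+1) D) => A ↑p ↑q).det
      = (Matrix.of fun p q : ↥D =>
          if (q : ℕ) = m then A ↑p m + ρ * A ↑p (m+1) else A ↑p ↑q).det * A (m+1) (m+1) := by
  have hnD : (m+1) ∉ D := fun h => absurd (hD _ h) (by omega)
  set E : Finset ℕ := insert (m+1) D with hE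
  set M : Matrix ↥E ↥E ℝ := Matrix.of fun p q => A ↑p ↑q with hM
  have hj0mem : m ∈ E := Finset.mem_insert_of_mem hmem
  set j0 : ↥E := ⟨m, hj0mem⟩ with hj0
  set j1 : ↥E := ⟨m+1, Finset.mem_insert_self _ _⟩ with hj1
  have hj01 : j0 ≠ j1 := by
    simp only [hj0, hj1, ne_eq, Subtype.mk.injEq]; omega
  set N := M.updateCol j0 (fun k => M k j0 + ρ • M k j1) with hN
  have hdetN : N.det = M.det := Matrix.det_updateCol_add_smul_self M hj01 ρ
  let ε : ↥D ⊕ Unit ≃ ↥E :=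
    { toFun := Sum.elim (fun p => ⟨↑p, Finset.mem_insert_of_mem p.2⟩) (fun _ => j1)
      invFun := fun q => if h : (q : ℕ) ∈ D then Sum.inl ⟨↑q, h⟩ else Sum.inr ()
      left_inv := by
        rintro (p | u)
        · simp [p.2]
        · simp [hj1, hnD]
      right_inv := by
        rintro ⟨q, hq⟩
        by_cases h : q ∈ D
        · simp [h]
        · have hq1 : q = m + 1 := by
            rcases Finset.mem_insert.mp hq with h' | h'
            · exact h'
            · exact absurd h' h
          subst hq1
          simp [hnD, hj1] }
  have key : N.submatrix ε ε = Matrix.fromBlocks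
      (Matrix.of fun p q : ↥D => if (q : ℕ) = m then A ↑p m + ρ * A ↑p (m+1) else A ↑p ↑q)
      (Matrix.of fun (p : ↥D) (_ : Unit) => A ↑p (m+1))
      0
      (Matrix.of fun (_ : Unit) (_ : Unit) => A (m+1) (m+1)) := by
    ext i j
    rcases i with p | u <;> rcases j with q | v
    · by_cases hq : (q : ℕ) = m
      · have hqj0 : (⟨↑q, Finset.mem_insert_of_mem q.2⟩ : ↥E) = j0 := Subtype.ext hq
        simp [ε, N, Matrix.updateCol_apply, hqj0, hq, M, hj0, hj1, smul_eq_mul]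
      · have hqj0 : (⟨↑q, Finset.mem_insert_of_mem q.2⟩ : ↥E) ≠ j0 := by
          simp only [ne_eq, hj0, Subtype.mk.injEq]; exact hq
        simp [ε, N, Matrix.updateCol_apply, hqj0, hq, M]
    · simp [ε, N, Matrix.updateCol_apply, hj01.symm, M, hj1, hj0]
    · by_cases hq : (q : ℕ) = m
      · have hqj0 : (⟨↑q, Finset.mem_insert_of_mem q.2⟩ : ↥E) = j0 := Subtype.ext hq
        have : A (m+1) m + ρ * A (m+1) (m+1) = 0 := hρ
        simp [ε, N, Matrix.updateCol_apply, hqj0, M, hj0, hj1, smul_eq_mul, hq, this]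
      · have hqj0 : (⟨↑q, Finset.mem_insert_of_mem q.2⟩ : ↥E) ≠ j0 := by
          simp only [ne_eq, hj0, Subtype.mk.injEq]; exact hq
        have hql : (q : ℕ) + 2 ≤ m + 1 := by
          have := hD _ q.2; omega
        simp [ε, N, Matrix.updateCol_apply, hqj0, M, hj1, hz _ hql]
    · simp [ε, N, Matrix.updateCol_apply, hj01.symm, M, hj1, hj0]
  have hdet2 : (N.submatrix ε ε).det = N.det := Matrix.det_submatrix_equiv_self ε N
  rw [← hdetN, ← hdet2, key, Matrix.det_fromBlocks_zero₂₁]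
  congr 1
  rw [Matrix.det_unique]
  rfl

lemma tight_KL : ∀ (e : ℕ) (A : ℕ → ℕ → ℝ),
    (∀ D : Finset ℕ, D.Nonempty → (∀ i ∈ D, i < e) →
      0 < (Matrix.of fun p q : ↥D => A ↑p ↑q).det) →
    (∀ i, 0 < i → i < e → A i (i-1) < 0) →
    (∀ i, i < e → ∀ k, k + 2 ≤ i → A i k = 0) →
    ∀ a, a < e → ∀ w : ℕ → ℝ, ∀ c : ℝ, c ≤ 0 →
    (∀ i ∈ Finset.Ico a e, ∑ k ∈ Finset.Ico a e, A i k * w k = if i = a then c else 0) →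
    (∀ k ∈ Finset.Ico a e, w k ≤ 0) ∧ (c = 0 → ∀ k ∈ Finset.Ico a e, w k = 0)
      ∧ (w a = 0 → c = 0) := by
  intro e
  induction e with
  | zero => intro A _ _ _ a ha; omega
  | succ n ih =>
    intro A hPm hsub hz a ha w c hc heq
    by_cases han : a = n
    · -- singleton window
      subst han
      have hIco : Finset.Ico a (a+1) = {a} := by
        rw [Finset.Ico_add_one_right_eq_Icc, Finset.Icc_self]
      have haa : 0 < A a a := tight_diag_pos A (a+1) hPm (by omega)
      have he := heq a (by rw [hIco]; exact Finset.mem_singleton_self a)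
      rw [hIco, Finset.sum_singleton, if_pos rfl] at he
      refine ⟨?_, ?_, ?_⟩
      · intro k hk
        rw [hIco, Finset.mem_singleton] at hk
        subst hk
        nlinarith
      · intro hc0 k hk
        rw [hIco, Finset.mem_singleton] at hk
        subst hk
        rw [hc0] at he
        rcases mul_eq_zero.mp he with h | h
        · exact absurd h (ne_of_gt haa)
        · exact h
      · intro hw0
        rw [hw0, mul_zero] at he
        exact he.symm
    · have haltn : a < n := by omega
      obtain ⟨m, rfl⟩ : ∃ m, n = m + 1 := ⟨n - 1, by omega⟩
      have hAnn : 0 < A (m+1) (m+1) := tight_diag_pos A (m+2) hPm (by omega)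
      have hsubn : A (m+1) m < 0 := by
        have := hsub (m+1) (by omega) (by omega)
        simpa using this
      -- row m+1 gives w (m+1) = ρ * w m
      have hrow := heq (m+1) (by simp [Finset.mem_Ico]; omega)
      rw [if_neg (by omega)] at hrow
      rw [Finset.sum_Ico_succ_top (by omega : a ≤ m + 1),
          Finset.sum_Ico_succ_top (by omega : a ≤ m)] at hrow
      have hz0 : ∑ k ∈ Finset.Ico a m, A (m+1) k * w k = 0 := by
        apply Finset.sum_eq_zero
        intro k hk
        rw [Finset.mem_Ico] at hk
        rw [hz (m+1) (by omega) k (by omega), zero_mul]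
      rw [hz0, zero_add] at hrow
      set ρ : ℝ := -A (m+1) m / A (m+1) (m+1) with hρdef
      have hρpos : 0 < ρ := by
        apply div_pos (by linarith) hAnn
      have hρeq : A (m+1) m + ρ * A (m+1) (m+1) = 0 := by
        rw [hρdef, div_mul_cancel₀ _ (ne_of_gt hAnn)]; ring
      have hwn : w (m+1) = ρ * w m := by
        rw [hρdef]
        field_simp
        linarith
      set A' : ℕ → ℕ → ℝ := fun i k => if k = m then A i m + ρ * A i (m+1) else A i k with hA'
      have hA'val : ∀ i k, A' i k = if k = m then A i m + ρ * A i (m+1) else A i k := fun i k => rfl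
      have hPm' : ∀ D : Finset ℕ, D.Nonempty → (∀ i ∈ D, i < m + 1) →
          0 < (Matrix.of fun p q : ↥D => A' ↑p ↑q).det := by
        intro D hDne hDlt
        by_cases hmD : m ∈ D
        · have hid := tight_det_elim A m (ne_of_gt hAnn)
            (fun k hk => hz (m+1) (by omega) k hk) ρ hρeq D hDlt hmD
          have hpos := hPm (insert (m+1) D)
            ⟨m+1, Finset.mem_insert_self _ _⟩
            (by intro y hy
                rcases Finset.mem_insert.mp hy with h' | h'
                · omega
                · have := hDlt y h'; omega)
          rw [hid] at hpos
          have hgoal : (Matrix.of fun p q : ↥D =>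
              if (q : ℕ) = m then A ↑p m + ρ * A ↑p (m+1) else A ↑p ↑q)
              = (Matrix.of fun p q : ↥D => A' ↑p ↑q) := by
            ext p q
            simp only [Matrix.of_apply, hA'val]
          rw [hgoal] at hpos
          nlinarith
        · have hgoal : (Matrix.of fun p q : ↥D => A' ↑p ↑q)
              = (Matrix.of fun p q : ↥D => A ↑p ↑q) := by
            ext p q
            have : (q : ℕ) ≠ m := fun h => hmD (h ▸ q.2)
            simp only [Matrix.of_apply, hA'val, if_neg this]
          rw [hgoal]
          exact hPm D hDne (fun y hy => by have := hDlt y hy; omega)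
      have hsub' : ∀ i, 0 < i → i < m + 1 → A' i (i-1) < 0 := by
        intro i h1 h2
        rw [hA'val, if_neg (by omega)]
        exact hsub i h1 (by omega)
      have hz' : ∀ i, i < m + 1 → ∀ k, k + 2 ≤ i → A' i k = 0 := by
        intro i h1 k h2
        rw [hA'val, if_neg (by omega)]
        exact hz i (by omega) k h2
      have heq' : ∀ i ∈ Finset.Ico a (m+1),
          ∑ k ∈ Finset.Ico a (m+1), A' i k * w k = if i = a then c else 0 := by
        intro i hi
        rw [Finset.mem_Ico] at hi
        have expand : ∀ k ∈ Finset.Ico a (m+1),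
            A' i k * w k = A i k * w k + (if k = m then A i (m+1) * w (m+1) else 0) := by
          intro k _
          by_cases hk : k = m
          · subst hk
            rw [hA'val, if_pos rfl, if_pos rfl, hwn]
            ring
          · rw [hA'val, if_neg hk, if_neg hk, add_zero]
        rw [Finset.sum_congr rfl expand, Finset.sum_add_distrib,
            Finset.sum_ite_eq' (Finset.Ico a (m+1)) m (fun _ => A i (m+1) * w (m+1)),
            if_pos (by rw [Finset.mem_Ico]; omega)]
        have htot := heq i (by rw [Finset.mem_Ico]; omega)
        rw [Finset.sum_Ico_succ_top (by omega : a ≤ m + 1)] at htot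
        exact htot
      obtain ⟨h1, h2, h3⟩ := ih A' hPm' hsub' hz' a (by omega) w c hc heq'
      have hmmem : m ∈ Finset.Ico a (m+1) := by rw [Finset.mem_Ico]; omega
      refine ⟨?_, ?_, h3⟩
      · intro k hk
        rw [Finset.mem_Ico] at hk
        by_cases hkm : k = m + 1
        · subst hkm
          rw [hwn]
          have := h1 m hmmem
          nlinarith
        · exact h1 k (by rw [Finset.mem_Ico]; omega)
      · intro hc0 k hk
        rw [Finset.mem_Ico] at hk
        by_cases hkm : k = m + 1
        · subst hkm
          rw [hwn, h2 hc0 m hmmem, mul_zero]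
        · exact h2 hc0 k (by rw [Finset.mem_Ico]; omega)

theorem stmt_6 {d : ℕ} (R : Matrix (Fin d) (Fin d) ℝ)
    (hP : IsPMatrix R)
    (hdiag : ∀ i, 0 < R i i)
    (hsub : ∀ i j : Fin d, (j : ℕ) + 1 = (i : ℕ) → R i j < 0)
    (hzero : ∀ i j : Fin d, (j : ℕ) + 2 ≤ (i : ℕ) → R i j = 0) :
    ∀ b : Fin d → ℝ, (∀ j, 0 < b j) → IsTightSystem R b := by
  intro b hb x xj hx01 heq hxmono hxjmono hxjerase hxempty hxjempty
  classical
  -- the ℕ-indexed matrix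
  set Rn : ℕ → ℕ → ℝ := fun p q =>
    if h : p < d ∧ q < d then R ⟨p, h.1⟩ ⟨q, h.2⟩ else if p = q then 1 else 0 with hRndef
  have hRnval : ∀ (i j : Fin d), Rn ↑i ↑j = R i j := by
    intro i j
    simp only [hRndef]
    rw [dif_pos ⟨i.isLt, j.isLt⟩]
  -- suffix sets
  set S : ℕ → Finset (Fin d) := fun a => Finset.univ.filter (fun i : Fin d => a ≤ ↑i) with hSdef
  have hmemS : ∀ a (i : Fin d), i ∈ S a ↔ a ≤ ↑i := by
    intro a i; simp [hSdef]
  have hS0 : S 0 = Finset.univ := by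
    ext i; simp [hSdef]
  have hSempty : ∀ a, d ≤ a → S a = ∅ := by
    intro a ha; ext i; simp only [hSdef, Finset.mem_filter, Finset.mem_univ, true_and,
      Finset.notMem_empty, iff_false]
    have := i.isLt; omega
  have hSsub : ∀ a, S (a+1) ⊆ S a := by
    intro a i hi
    rw [hmemS] at *
    omega
  have hSerase : ∀ a (h : a < d), (S a).erase ⟨a, h⟩ = S (a+1) := by
    intro a h; ext i
    simp only [Finset.mem_erase, hmemS, Fin.ne_iff_vne]
    omega
  have hxle1 : ∀ D, x D ≤ 1 := by
    intro D
    have := hxmono ∅ D (Finset.empty_subset D)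
    rwa [hxempty] at this
  -- transfer of the P-matrix property
  have hPn : ∀ D : Finset ℕ, D.Nonempty → (∀ i ∈ D, i < d) →
      0 < (Matrix.of fun p q : ↥D => Rn ↑p ↑q).det := by
    intro D hne hlt
    set D' : Finset (Fin d) := D.attachFin hlt with hD'
    have hne' : D'.Nonempty := by
      obtain ⟨y, hy⟩ := hne
      exact ⟨⟨y, hlt y hy⟩, (Finset.mem_attachFin hlt).mpr hy⟩
    have hdet := hP D' hne'
    let e : ↥D' ≃ ↥D :=
      { toFun := fun q => ⟨↑↑q, (Finset.mem_attachFin hlt).mp q.2⟩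
        invFun := fun p => ⟨⟨↑p, hlt _ p.2⟩, (Finset.mem_attachFin hlt).mpr p.2⟩
        left_inv := fun q => by ext; rfl
        right_inv := fun p => by ext; rfl }
    have hmx : (Matrix.of fun p q : ↥D => Rn ↑p ↑q)
        = (R.submatrix (fun i : ↥D' => (i : Fin d)) (fun j : ↥D' => (j : Fin d))).submatrix
            e.symm e.symm := by
      ext p q
      simp only [Matrix.of_apply, Matrix.submatrix_apply, hRndef]
      rw [dif_pos ⟨hlt _ p.2, hlt _ q.2⟩]
      rfl
    rw [hmx, Matrix.det_submatrix_equiv_self]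
    exact hdet
  have hsubn : ∀ i, 0 < i → i < d → Rn i (i-1) < 0 := by
    intro i h1 h2
    simp only [hRndef]
    rw [dif_pos ⟨h2, by omega⟩]
    exact hsub ⟨i, h2⟩ ⟨i-1, by omega⟩ (by simp; omega)
  have hzn : ∀ i, i < d → ∀ k, k + 2 ≤ i → Rn i k = 0 := by
    intro i h1 k h2
    simp only [hRndef]
    rw [dif_pos ⟨h1, by omega⟩]
    exact hzero ⟨i, h1⟩ ⟨k, by omega⟩ (by simp; omega)
  -- the window vector and the input constant
  set w : ℕ → ℕ → ℝ := fun a k =>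
    if h : k < d then b ⟨k, h⟩ * (xj ⟨k, h⟩ (S a) - x (S a)) else 0 with hwdef
  have hwval : ∀ a k (h : k < d), w a k = b ⟨k, h⟩ * (xj ⟨k, h⟩ (S a) - x (S a)) := by
    intro a k h
    simp only [hwdef]
    rw [dif_pos h]
  set cv : ℕ → ℝ := fun a => if a = 0 then 0 else -(Rn a (a-1) * w a (a-1)) with hcvdef
  have hcv0 : cv 0 = 0 := by simp [hcvdef]
  have hcvs : ∀ a, cv (a+1) = -(Rn (a+1) a * w (a+1) a) := by
    intro a; simp [hcvdef]
  -- the master reformulation of the equations on suffix sets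
  have hsetup : ∀ a, a < d → ∀ i : Fin d, a ≤ ↑i →
      ∑ k ∈ Finset.Ico a d, Rn ↑i k * w a k = if (↑i : ℕ) = a then cv a else 0 := by
    intro a ha i hi
    have h0 := heq (S a) i ((hmemS a i).mpr hi)
    have h1 : ∑ j : Fin d, R i j * b j * (xj j (S a) - x (S a))
        = ∑ k ∈ Finset.range d, Rn ↑i k * w a k := by
      rw [← Fin.sum_univ_eq_sum_range (fun k => Rn ↑i k * w a k) d]
      apply Finset.sum_congr rfl
      intro j _
      rw [hRnval i j, hwval a ↑j j.isLt]
      simp only [Fin.eta]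
      ring
    rw [h1] at h0
    rw [Finset.range_eq_Ico, ← Finset.sum_Ico_consecutive _ (Nat.zero_le a) (le_of_lt ha)] at h0
    rcases Nat.eq_zero_or_pos a with h | h
    · subst h
      rw [Finset.Ico_self, Finset.sum_empty, zero_add] at h0
      rw [hcv0, ite_self]
      exact h0
    · obtain ⟨a', rfl⟩ : ∃ a', a = a' + 1 := ⟨a - 1, by omega⟩
      rw [Finset.sum_Ico_succ_top (Nat.zero_le a')] at h0
      have hz0 : ∑ k ∈ Finset.Ico 0 a', Rn ↑i k * w (a'+1) k = 0 := by
        apply Finset.sum_eq_zero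
        intro k hk
        rw [Finset.mem_Ico] at hk
        rw [hzn ↑i i.isLt k (by omega), zero_mul]
      rw [hz0, zero_add] at h0
      by_cases hia : (↑i : ℕ) = a' + 1
      · rw [if_pos hia, hcvs a', hia]
        rw [hia] at h0
        linarith
      · rw [if_neg hia]
        rw [hzn ↑i i.isLt a' (by omega), zero_mul, zero_add] at h0
        exact h0
  -- Phase 1 (upward): the subdiagonal control
  have hQ : ∀ a : ℕ, ∀ k : Fin d, a ≤ ↑k → xj k (S a) ≤ x (S a) := by
    intro a
    induction a with
    | zero =>
      intro k hk
      have hd : 0 < d := Nat.lt_of_le_of_lt (Nat.zero_le _) k.isLt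
      obtain ⟨h1, -, -⟩ := tight_KL d Rn hPn hsubn hzn 0 hd (w 0) 0 le_rfl (by
        intro i hi
        rw [Finset.mem_Ico] at hi
        have := hsetup 0 hd ⟨i, hi.2⟩ (Nat.zero_le _)
        rw [hcv0] at this
        simpa using this)
      have h2 := h1 ↑k (Finset.mem_Ico.mpr ⟨Nat.zero_le _, k.isLt⟩)
      rw [hwval 0 ↑k k.isLt] at h2
      simp only [Fin.eta] at h2
      nlinarith [hb k]
    | succ a ihQ =>
      intro k hk
      have had : a + 1 < d := Nat.lt_of_le_of_lt hk k.isLt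
      have ha' : a < d := by omega
      have hRneg : Rn (a+1) a < 0 := by
        have := hsubn (a+1) (Nat.succ_pos a) had
        simpa using this
      have hxja : xj ⟨a, ha'⟩ (S (a+1)) = xj ⟨a, ha'⟩ (S a) := by
        rw [← hSerase a ha']
        exact (hxjerase ⟨a, ha'⟩ (S a) ((hmemS a _).mpr (le_refl a))).symm
      have hwa : w (a+1) a ≤ 0 := by
        rw [hwval (a+1) a ha']
        have h2 : xj ⟨a, ha'⟩ (S a) ≤ x (S a) := ihQ ⟨a, ha'⟩ (le_refl a)
        have h3 : x (S a) ≤ x (S (a+1)) := hxmono (S (a+1)) (S a) (hSsub a)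
        nlinarith [hb ⟨a, ha'⟩, hxja]
      have hcle : cv (a+1) ≤ 0 := by
        rw [hcvs a]
        nlinarith [hRneg, hwa]
      obtain ⟨h1, -, -⟩ := tight_KL d Rn hPn hsubn hzn (a+1) had (w (a+1)) (cv (a+1)) hcle (by
        intro i hi
        rw [Finset.mem_Ico] at hi
        have := hsetup (a+1) had ⟨i, hi.2⟩ hi.1
        simpa using this)
      have h2 := h1 ↑k (Finset.mem_Ico.mpr ⟨hk, k.isLt⟩)
      rw [hwval (a+1) ↑k k.isLt] at h2
      simp only [Fin.eta] at h2
      nlinarith [hb k]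
  -- Phase 2 (downward): everything on suffix sets equals one
  have hAUX : ∀ t a : ℕ, d ≤ a + t →
      x (S a) = 1 ∧ (∀ k : Fin d, a ≤ ↑k → xj k (S a) = 1)
        ∧ (∀ k : Fin d, (↑k : ℕ) + 1 = a → xj k (S a) = 1) := by
    intro t
    induction t with
    | zero =>
      intro a hle
      rw [hSempty a (by omega)]
      exact ⟨hxempty, fun k hk => absurd k.isLt (by omega), fun k _ => hxjempty k⟩
    | succ t iht =>
      intro a hle
      by_cases had : d ≤ a + t
      · exact iht a had
      · have ha : a < d := by omega
        obtain ⟨hx1, hxj1, hxj2⟩ := iht (a+1) (by omega)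
        have hcle : cv a ≤ 0 := by
          rcases Nat.eq_zero_or_pos a with h0 | h0
          · subst h0; rw [hcv0]
          · obtain ⟨a', rfl⟩ : ∃ a', a = a' + 1 := ⟨a - 1, by omega⟩
            rw [hcvs a']
            have ha'' : a' < d := by omega
            have hRneg : Rn (a'+1) a' < 0 := by
              have := hsubn (a'+1) (Nat.succ_pos a') ha
              simpa using this
            have hwa : w (a'+1) a' ≤ 0 := by
              rw [hwval (a'+1) a' ha'']
              have hxja : xj ⟨a', ha''⟩ (S (a'+1)) = xj ⟨a', ha''⟩ (S a') := by
                rw [← hSerase a' ha'']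
                exact (hxjerase ⟨a', ha''⟩ (S a') ((hmemS a' _).mpr (le_refl a'))).symm
              have h2 : xj ⟨a', ha''⟩ (S a') ≤ x (S a') := hQ a' ⟨a', ha''⟩ (le_refl a')
              have h3 : x (S a') ≤ x (S (a'+1)) := hxmono (S (a'+1)) (S a') (hSsub a')
              nlinarith [hb ⟨a', ha''⟩, hxja]
            nlinarith
        obtain ⟨h1, h2, h3⟩ := tight_KL d Rn hPn hsubn hzn a ha (w a) (cv a) hcle (by
          intro i hi
          rw [Finset.mem_Ico] at hi
          have := hsetup a ha ⟨i, hi.2⟩ hi.1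
          simpa using this)
        have hxja : xj ⟨a, ha⟩ (S a) = 1 := by
          rw [hxjerase ⟨a, ha⟩ (S a) ((hmemS a _).mpr (le_refl a)), hSerase a ha]
          exact hxj2 ⟨a, ha⟩ rfl
        have hXa : x (S a) = 1 := by
          have hw := h1 a (Finset.mem_Ico.mpr ⟨le_rfl, ha⟩)
          rw [hwval a a ha, hxja] at hw
          have hle1 := hxle1 (S a)
          nlinarith [hb ⟨a, ha⟩]
        have hwa0 : w a a = 0 := by
          rw [hwval a a ha, hxja, hXa]; ring
        have hc0 : cv a = 0 := h3 hwa0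
        have hwall := h2 hc0
        refine ⟨hXa, ?_, ?_⟩
        · intro k hk
          have hwk := hwall ↑k (Finset.mem_Ico.mpr ⟨hk, k.isLt⟩)
          rw [hwval a ↑k k.isLt] at hwk
          simp only [Fin.eta] at hwk
          have hbk := hb k
          have hz' : xj k (S a) - x (S a) = 0 := by
            rcases mul_eq_zero.mp hwk with h | h
            · exact absurd h (ne_of_gt hbk)
            · exact h
          linarith
        · intro k hk
          obtain ⟨a', rfl⟩ : ∃ a', a = a' + 1 := ⟨↑k, hk.symm⟩
          have ha'' : a' < d := by omega
          rw [hcvs a'] at hc0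
          have hRneg : Rn (a'+1) a' < 0 := by
            have := hsubn (a'+1) (Nat.succ_pos a') ha
            simpa using this
          have hwa' : w (a'+1) a' = 0 := by
            have hmul : Rn (a'+1) a' * w (a'+1) a' = 0 := by linarith
            rcases mul_eq_zero.mp hmul with h | h
            · exact absurd h (ne_of_lt hRneg)
            · exact h
          rw [hwval (a'+1) a' ha''] at hwa'
          have hbk := hb ⟨a', ha''⟩
          have hxx : xj ⟨a', ha''⟩ (S (a'+1)) - x (S (a'+1)) = 0 := by
            rcases mul_eq_zero.mp hwa' with h | h
            · exact absurd h (ne_of_gt hbk)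
            · exact h
          have hkk : k = ⟨a', ha''⟩ := Fin.ext (show (k:ℕ) = a' by omega)
          rw [hkk]
          linarith
  -- Phase 3: conclude
  obtain ⟨hXu, hYu, -⟩ := hAUX d 0 (by omega)
  rw [hS0] at hXu
  constructor
  · intro D
    have h1 := hxmono D Finset.univ (Finset.subset_univ D)
    have h2 := hxle1 D
    linarith
  · intro j D
    have h1 := hxjmono j D Finset.univ (Finset.subset_univ D)
    have h2 : xj j D ≤ 1 := by
      have := hxjmono j ∅ D (Finset.empty_subset D)
      rwa [hxjempty j] at this
    have h3 := hYu j (Nat.zero_le _)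
    rw [hS0] at h3
    linarith
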